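/- Fix d, h ∈ ℕ and set |Λ^n| := (2n)^d. Let {S^n}_{n∈ℕ} be a weakly regular and weakly nearly additive ℝ^h-valued process consisting of integrable random variables, and suppose sup_{n∈ℕ} ‖E[S^n]‖/|Λ^n| < ∞. Then the limit Ŝ := lim_{n→∞} E[S^n]/|Λ^n| exists in ℝ^h, and S^n/|Λ^n| → Ŝ in probability as n → ∞. -/

import Mathlib

open MeasureTheory Filter
open scoped ENNReal RealInnerProductSpace

namespace RandomCubical

variable {Ω : Type*} [MeasurableSpace Ω]

/-- `|Λ^n| = (2n)^d`. -/
noncomputable def vol (d n : ℕ) : ℝ := (2 * (n : ℝ)) ^ d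

/-- The lattice box `ℤ^d ∩ [-m, m]^d`. -/
noncomputable def box (d m : ℕ) : Finset (Fin d → ℤ) :=
  Fintype.piFinset fun _ => Finset.Icc (-(m : ℤ)) (m : ℤ)

/-- The conditions of weak `r`-near additivity, for a given witness family
`T n z` (`z ∈ ℤ^d`) of independent copies of `S n`:
`sup_{m} |Λ^{(2m+1)k}|⁻¹ ‖S^{(2m+1)k} - ∑_z S^{k-r,z}‖ → 0` in probability as `k → ∞`. -/
def WeakNAWitness (d h : ℕ) (P : Measure Ω) (S : ℕ → Ω → EuclideanSpace ℝ (Fin h))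
    (r : ℕ) (T : ℕ → (Fin d → ℤ) → Ω → EuclideanSpace ℝ (Fin h)) : Prop :=
  (∀ n, 1 ≤ n → ProbabilityTheory.iIndepFun (T n) P) ∧
  (∀ n, 1 ≤ n → ∀ z, ProbabilityTheory.IdentDistrib (T n z) (S n) P P) ∧
  ∀ ε > (0 : ℝ), Tendsto
    (fun k => P {ω | ∃ m : ℕ, 1 ≤ m ∧ ε * vol d ((2 * m + 1) * k) <
        ‖S ((2 * m + 1) * k) ω - ∑ z ∈ box d m, T (k - r) z ω‖})
    atTop (nhds 0)

/-- Weakly nearly additive process. -/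
def WeakNearlyAdditive (d h : ℕ) (P : Measure Ω)
    (S : ℕ → Ω → EuclideanSpace ℝ (Fin h)) : Prop :=
  ∃ r T, WeakNAWitness d h P S r T

/-- Weakly regular process: for each fixed `k`,
`|Λ^n|⁻¹ ‖S^n - S^{(2 m_n + 1)k}‖ → 0` in probability as `n → ∞`, where `m_n` is the
unique integer with `(2 m_n + 1)k ≤ n < (2 m_n + 3)k`. -/
def WeakRegular (d h : ℕ) (P : Measure Ω)
    (S : ℕ → Ω → EuclideanSpace ℝ (Fin h)) : Prop :=
  ∀ k, 1 ≤ k → ∀ ε > (0 : ℝ), Tendsto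
    (fun n => P {ω | ∃ m : ℕ, (2 * m + 1) * k ≤ n ∧ n < (2 * m + 3) * k ∧
        ε * vol d n < ‖S n ω - S ((2 * m + 1) * k) ω‖})
    atTop (nhds 0)


open ProbabilityTheory

lemma vol_pos {d n : ℕ} (hn : 1 ≤ n) : 0 < vol d n := by
  have h1 : (1:ℝ) ≤ (n:ℝ) := by exact_mod_cast hn
  exact pow_pos (by linarith) d

lemma vol_mono {d : ℕ} : Monotone (vol d) := by
  intro a b hab
  have : ((a:ℝ)) ≤ b := by exact_mod_cast hab
  exact pow_le_pow_left₀ (by positivity) (by linarith) d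

lemma card_box (d m : ℕ) : (box d m).card = (2 * m + 1) ^ d := by
  simp only [box, Fintype.card_piFinset, Int.card_Icc]
  have h : ((m:ℤ) + 1 - -(m:ℤ)).toNat = 2 * m + 1 := by omega
  rw [Finset.prod_const, h, Finset.card_univ, Fintype.card_fin]

lemma box_mono {d : ℕ} {a b : ℕ} (hab : a ≤ b) : box d a ⊆ box d b := by
  intro x hx
  simp only [box, Fintype.mem_piFinset, Finset.mem_Icc] at hx ⊢
  intro i
  have := hx i
  constructor <;> [linarith [Int.ofNat_le.mpr hab, (this).1]; linarith [Int.ofNat_le.mpr hab, (this).2]]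

lemma vol_mul (d m k : ℕ) : vol d ((2 * m + 1) * k) = ((2*m+1:ℕ):ℝ)^d * vol d k := by
  simp only [vol]
  push_cast
  rw [← mul_pow]
  ring_nf

/-- Enumeration list: `boxList d m` lists the elements of `box d m`, with
`boxList d m` a prefix of `boxList d m'` for `m ≤ m'`. -/
noncomputable def boxList (d : ℕ) : ℕ → List (Fin d → ℤ)
  | 0 => (box d 0).toList
  | (m+1) => boxList d m ++ ((box d (m+1)) \ (box d m)).toList

lemma boxList_toFinset (d m : ℕ) : (boxList d m).toFinset = box d m := by
  induction m with
  | zero => simp [boxList]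
  | succ m ih =>
      simp only [boxList, List.toFinset_append, ih, Finset.toList_toFinset]
      exact Finset.union_sdiff_of_subset (box_mono (Nat.le_succ m))

lemma boxList_nodup (d m : ℕ) : (boxList d m).Nodup := by
  induction m with
  | zero => simp [boxList, Finset.nodup_toList]
  | succ m ih =>
      refine List.Nodup.append ih (Finset.nodup_toList _) ?_
      intro a ha hb
      have ha' : a ∈ box d m := by
        rw [← boxList_toFinset]; exact List.mem_toFinset.2 ha
      have hb' : a ∈ (box d (m+1)) \ (box d m) := Finset.mem_toList.1 hb
      exact (Finset.mem_sdiff.1 hb').2 ha'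

lemma boxList_length (d m : ℕ) : (boxList d m).length = (2 * m + 1) ^ d := by
  rw [← card_box d m, ← boxList_toFinset d m, List.card_toFinset,
    (boxList_nodup d m).dedup]

lemma boxList_prefix (d : ℕ) {a b : ℕ} (hab : a ≤ b) :
    boxList d a <+: boxList d b := by
  induction b with
  | zero => simp_all
  | succ b ih =>
      rcases Nat.lt_or_ge a (b+1) with hlt | hge
      · exact (ih (Nat.lt_succ_iff.1 hlt)).trans ⟨_, rfl⟩
      · have : a = b + 1 := le_antisymm hab hge
        subst this; exact List.prefix_refl _



lemma lt_len {d n : ℕ} (hd : 1 ≤ d) : n < (2 * n + 1) ^ d :=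
  Nat.lt_of_lt_of_le (by omega) (Nat.le_self_pow (by omega) _)

/-- Enumeration of `ℤ^d` such that `box d m` is an initial segment. -/
noncomputable def enum (d : ℕ) (n : ℕ) : Fin d → ℤ := (boxList d n).getD n (fun _ => 0)

lemma enum_eq_getElem {d : ℕ} (hd : 1 ≤ d) {m n : ℕ} (hn : n < (2 * m + 1) ^ d) :
    ∃ hlt : n < (boxList d m).length, enum d n = (boxList d m)[n] := by
  have hlen : n < (boxList d m).length := by rw [boxList_length]; exact hn
  refine ⟨hlen, ?_⟩
  have hlen' : n < (boxList d n).length := by rw [boxList_length]; exact lt_len hd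
  rcases Nat.le_total m n with hmn | hnm
  · have hp := boxList_prefix d hmn
    rw [enum, List.getD_eq_getElem _ _ hlen']
    exact (hp.getElem hlen).symm
  · have hp := boxList_prefix d hnm
    rw [enum, List.getD_eq_getElem _ _ hlen']
    exact hp.getElem hlen'

lemma enum_injective {d : ℕ} (hd : 1 ≤ d) : Function.Injective (enum d) := by
  intro a b hab
  set m := max a b with hm
  have ha : a < (2 * m + 1) ^ d := lt_of_le_of_lt (le_max_left a b) (lt_len hd)
  have hb : b < (2 * m + 1) ^ d := lt_of_le_of_lt (le_max_right a b) (lt_len hd)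
  obtain ⟨ha', hea⟩ := enum_eq_getElem hd (m := m) ha
  obtain ⟨hb', heb⟩ := enum_eq_getElem hd (m := m) hb
  rw [hea, heb] at hab
  exact ((boxList_nodup d m).getElem_inj_iff).1 hab

lemma enum_image {d : ℕ} (hd : 1 ≤ d) (m : ℕ) :
    (Finset.range ((2 * m + 1) ^ d)).image (enum d) = box d m := by
  apply Finset.eq_of_subset_of_card_le
  · intro x hx
    simp only [Finset.mem_image, Finset.mem_range] at hx
    obtain ⟨n, hn, rfl⟩ := hx
    obtain ⟨hlt, he⟩ := enum_eq_getElem hd hn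
    rw [he, ← boxList_toFinset d m]
    exact List.mem_toFinset.2 (List.getElem_mem hlt)
  · rw [card_box, Finset.card_image_of_injective _ (enum_injective hd), Finset.card_range]

lemma sum_enum {d : ℕ} (hd : 1 ≤ d) (m : ℕ) {E : Type*} [AddCommMonoid E]
    (f : (Fin d → ℤ) → E) :
    ∑ i ∈ Finset.range ((2 * m + 1) ^ d), f (enum d i) = ∑ z ∈ box d m, f z := by
  rw [← enum_image hd m, Finset.sum_image (fun a _ b _ hab => enum_injective hd hab)]

lemma lln {E : Type*} [NormedAddCommGroup E] [NormedSpace ℝ E] [CompleteSpace E]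
    [MeasurableSpace E] [BorelSpace E] [SecondCountableTopology E]
    {d : ℕ} (hd : 1 ≤ d) (P : Measure Ω) [IsProbabilityMeasure P]
    (T : (Fin d → ℤ) → Ω → E) (S : Ω → E)
    (hindep : iIndepFun T P)
    (hident : ∀ z, IdentDistrib (T z) S P P)
    (hSint : Integrable S P) :
    ∀ ε > (0:ℝ), Tendsto (fun m : ℕ => P {ω | ε ≤
      ‖(((2 * m + 1 : ℕ) : ℝ) ^ d)⁻¹ • ∑ z ∈ box d m, T z ω - ∫ ω, S ω ∂P‖})
      atTop (nhds 0) := by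
  set X : ℕ → Ω → E := fun i => T (enum d i) with hX
  have hint : Integrable (X 0) P := (hident _).integrable_iff.2 hSint
  have hindep' : Pairwise (Function.onFun (IndepFun · · P) X) := fun i j hij =>
    hindep.indepFun (fun hh => hij (enum_injective hd hh))
  have hident' : ∀ i, IdentDistrib (X i) (X 0) P P := fun i =>
    (hident _).trans (hident _).symm
  have hae := strong_law_ae X hint hindep' hident'
  have hintegral : ∫ ω, X 0 ω ∂P = ∫ ω, S ω ∂P := (hident _).integral_eq
  have htend : Tendsto (fun m : ℕ => (2 * m + 1) ^ d) atTop atTop :=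
    tendsto_atTop_mono (fun m => (lt_len hd).le) tendsto_id
  set f : ℕ → Ω → E := fun m ω => (((2 * m + 1 : ℕ) : ℝ) ^ d)⁻¹ • ∑ z ∈ box d m, T z ω
    with hf
  have hae' : ∀ᵐ ω ∂P, Tendsto (fun m => f m ω) atTop (nhds (∫ ω, S ω ∂P)) := by
    filter_upwards [hae] with ω hω
    rw [← hintegral]
    have := hω.comp htend
    convert this using 2 with m
    simp only [hf, Function.comp_apply]
    rw [← sum_enum hd m (fun z => T z ω)]
    push_cast
    rfl
  have hfm : ∀ m, AEStronglyMeasurable (f m) P := by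
    intro m
    apply AEStronglyMeasurable.const_smul
    exact Finset.aestronglyMeasurable_fun_sum _ fun z _ =>
      ((hident z).aemeasurable_fst).aestronglyMeasurable
  have := tendstoInMeasure_iff_dist.1 (tendstoInMeasure_of_tendsto_ae hfm hae')
  intro ε hε
  have h2 := this ε hε
  convert h2 using 3 with m
  ext ω
  simp only [hf, Set.mem_setOf_eq, dist_eq_norm]

/-- Deterministic estimate combining regularity, near-additivity and LLN errors. -/
lemma det_bound {E : Type*} [NormedAddCommGroup E] [NormedSpace ℝ E]
    (a b s I : E) (v q ε₁ C : ℝ) (hq : 0 < q) (hqv : q ≤ v)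
    (hC : 0 ≤ C) (hε₁ : 0 < ε₁)
    (h1 : ‖a - b‖ ≤ ε₁ * v) (h2 : ‖b - s‖ ≤ ε₁ * q)
    (h3 : ‖q⁻¹ • s - I‖ ≤ ε₁) (hI : ‖I‖ ≤ C)
    (hratio : 1 - ε₁ / (2 * ε₁ + C) ≤ q / v) :
    ‖v⁻¹ • a - I‖ ≤ 4 * ε₁ := by
  have hv : 0 < v := lt_of_lt_of_le hq hqv
  have hs : ‖s‖ ≤ (ε₁ + C) * q := by
    have h4 : ‖q⁻¹ • s‖ ≤ ε₁ + C := by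
      calc ‖q⁻¹ • s‖ = ‖(q⁻¹ • s - I) + I‖ := by rw [sub_add_cancel]
        _ ≤ ‖q⁻¹ • s - I‖ + ‖I‖ := norm_add_le _ _
        _ ≤ ε₁ + C := add_le_add h3 hI
    rw [norm_smul, Real.norm_eq_abs, abs_of_pos (inv_pos.2 hq), inv_mul_le_iff₀ hq] at h4
    nlinarith [h4]
  have hb : ‖b‖ ≤ (2 * ε₁ + C) * q := by
    calc ‖b‖ = ‖(b - s) + s‖ := by rw [sub_add_cancel]
      _ ≤ ‖b - s‖ + ‖s‖ := norm_add_le _ _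
      _ ≤ ε₁ * q + (ε₁ + C) * q := add_le_add h2 hs
      _ = (2 * ε₁ + C) * q := by ring
  have hdec : v⁻¹ • a - I =
      v⁻¹ • (a - b) + (v⁻¹ - q⁻¹) • b + q⁻¹ • (b - s) + (q⁻¹ • s - I) := by
    module
  have T1 : ‖v⁻¹ • (a - b)‖ ≤ ε₁ := by
    rw [norm_smul, Real.norm_eq_abs, abs_of_pos (inv_pos.2 hv)]
    rw [inv_mul_le_iff₀ hv]
    nlinarith [h1]
  have T2 : ‖(v⁻¹ - q⁻¹) • b‖ ≤ ε₁ := by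
    rw [norm_smul, Real.norm_eq_abs]
    have hle : v⁻¹ ≤ q⁻¹ := inv_anti₀ hq hqv
    rw [abs_of_nonpos (by linarith), neg_sub]
    have h5 : (q⁻¹ - v⁻¹) * ‖b‖ ≤ (q⁻¹ - v⁻¹) * ((2 * ε₁ + C) * q) :=
      mul_le_mul_of_nonneg_left hb (by linarith)
    have h6 : (q⁻¹ - v⁻¹) * ((2 * ε₁ + C) * q) = (2 * ε₁ + C) * (1 - q / v) := by
      field_simp
    have h7 : (2 * ε₁ + C) * (1 - q / v) ≤ (2 * ε₁ + C) * (ε₁ / (2 * ε₁ + C)) := by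
      apply mul_le_mul_of_nonneg_left _ (by linarith)
      linarith
    have h8 : (2 * ε₁ + C) * (ε₁ / (2 * ε₁ + C)) = ε₁ := by
      field_simp
    linarith
  have T3 : ‖q⁻¹ • (b - s)‖ ≤ ε₁ := by
    rw [norm_smul, Real.norm_eq_abs, abs_of_pos (inv_pos.2 hq)]
    rw [inv_mul_le_iff₀ hq]
    nlinarith [h2]
  calc ‖v⁻¹ • a - I‖
      = ‖v⁻¹ • (a - b) + (v⁻¹ - q⁻¹) • b + q⁻¹ • (b - s) + (q⁻¹ • s - I)‖ := by rw [hdec]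
    _ ≤ ‖v⁻¹ • (a - b) + (v⁻¹ - q⁻¹) • b + q⁻¹ • (b - s)‖ + ‖q⁻¹ • s - I‖ := norm_add_le _ _
    _ ≤ (‖v⁻¹ • (a - b) + (v⁻¹ - q⁻¹) • b‖ + ‖q⁻¹ • (b - s)‖) + ‖q⁻¹ • s - I‖ := by
        gcongr; exact norm_add_le _ _
    _ ≤ ((‖v⁻¹ • (a - b)‖ + ‖(v⁻¹ - q⁻¹) • b‖) + ‖q⁻¹ • (b - s)‖) + ‖q⁻¹ • s - I‖ := by
        gcongr; exact norm_add_le _ _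
    _ ≤ ((ε₁ + ε₁) + ε₁) + ε₁ := by gcongr
    _ = 4 * ε₁ := by ring

/-- `mfun k n` is the unique `m` with `(2m+1)k ≤ n < (2m+3)k` (for `n ≥ 3k ≥ 3`). -/
def mfun (k n : ℕ) : ℕ := (n / k - 1) / 2

lemma mfun_sandwich {k n : ℕ} (hk : 1 ≤ k) (hn : 3 * k ≤ n) :
    (2 * mfun k n + 1) * k ≤ n ∧ n < (2 * mfun k n + 3) * k ∧ 1 ≤ mfun k n := by
  have hk0 : 0 < k := hk
  have hrm : n % k < k := Nat.mod_lt n hk0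
  have e1 : n / k * k + n % k = n := Nat.div_add_mod' n k
  have hq3 : 3 ≤ n / k := by rw [Nat.le_div_iff_mul_le hk0]; omega
  have h1 : 2 * mfun k n + 1 ≤ n / k := by rw [mfun]; omega
  have h2 : n / k + 1 ≤ 2 * mfun k n + 3 := by rw [mfun]; omega
  refine ⟨?_, ?_, by rw [mfun]; omega⟩
  · calc (2 * mfun k n + 1) * k ≤ (n / k) * k := Nat.mul_le_mul_right k h1
      _ ≤ n := Nat.div_mul_le_self n k
  · calc n < (n / k + 1) * k := by rw [add_mul, one_mul]; omega
      _ ≤ (2 * mfun k n + 3) * k := Nat.mul_le_mul_right k h2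

lemma mfun_tendsto {k : ℕ} (hk : 1 ≤ k) : Tendsto (fun n => mfun k n) atTop atTop := by
  rw [tendsto_atTop]
  intro b
  rw [eventually_atTop]
  refine ⟨(2 * b + 1) * k, fun n hn => ?_⟩
  have hk0 : 0 < k := hk
  have h1 : 2 * b + 1 ≤ n / k := by
    rw [Nat.le_div_iff_mul_le hk0]; omega
  rw [mfun]; omega



lemma ratio_eventually (d : ℕ) {t : ℝ} (ht : 0 < t) :
    ∀ᶠ m : ℕ in atTop, 1 - t ≤ (((2 * m + 1 : ℕ) : ℝ) / ((2 * m + 3 : ℕ) : ℝ)) ^ d := by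
  have hden : Tendsto (fun m : ℕ => (2 : ℝ) / ((2 * m + 3 : ℕ) : ℝ)) atTop (nhds 0) := by
    have h1 : Tendsto (fun m : ℕ => 2 * m + 3) atTop atTop := by
      apply tendsto_atTop_atTop_of_monotone (fun a b hab => by omega)
      exact fun b => ⟨b, by omega⟩
    exact (tendsto_const_div_atTop_nhds_zero_nat 2).comp h1
  have h0 : Tendsto (fun m : ℕ => (((2 * m + 1 : ℕ) : ℝ) / ((2 * m + 3 : ℕ) : ℝ)) ^ d)
      atTop (nhds 1) := by
    have hbase : Tendsto (fun m : ℕ => ((2 * m + 1 : ℕ) : ℝ) / ((2 * m + 3 : ℕ) : ℝ))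
        atTop (nhds 1) := by
      have heq : ∀ m : ℕ, ((2 * m + 1 : ℕ) : ℝ) / ((2 * m + 3 : ℕ) : ℝ)
          = 1 - 2 / ((2 * m + 3 : ℕ) : ℝ) := by
        intro m
        have hm : ((2 * m + 3 : ℕ) : ℝ) ≠ 0 := by positivity
        field_simp
        push_cast
        ring
      have hstep : Tendsto (fun m : ℕ => 1 - 2 / ((2 * m + 3 : ℕ) : ℝ)) atTop
          (nhds (1 - 0)) := tendsto_const_nhds.sub hden
      rw [sub_zero] at hstep
      exact Tendsto.congr (fun m => (heq m).symm) hstep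
    have := hbase.pow d
    simpa using this
  exact h0.eventually (eventually_ge_nhds (by linarith))

lemma claimA {d h₀ : ℕ} (hd : 1 ≤ d) {P : Measure Ω} [IsProbabilityMeasure P]
    {S : ℕ → Ω → EuclideanSpace ℝ (Fin h₀)}
    (hint : ∀ n, Integrable (S n) P)
    (hreg : WeakRegular d h₀ P S)
    {r : ℕ} {T : ℕ → (Fin d → ℤ) → Ω → EuclideanSpace ℝ (Fin h₀)}
    (hW : WeakNAWitness d h₀ P S r T)
    {C : ℝ} (hC0 : 0 ≤ C) (hC : ∀ n, 1 ≤ n → ‖∫ ω, S n ω ∂P‖ ≤ C * vol d n)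
    {ε : ℝ} (hε : 0 < ε) {δ : ℝ≥0∞} (hδ : 0 < δ) :
    ∃ K : ℕ, r + 1 ≤ K ∧ ∀ k, K ≤ k → ∀ᶠ n in atTop,
      P {ω | ε ≤ ‖(vol d n)⁻¹ • S n ω - (vol d k)⁻¹ • ∫ ω, S (k - r) ω ∂P‖} ≤ δ := by
  obtain ⟨hTindep, hTident, hTclose⟩ := hW
  set ε₁ := ε / 5 with hε₁def
  have hε₁ : 0 < ε₁ := by positivity
  have hδ3 : (0 : ℝ≥0∞) < δ / 3 := ENNReal.div_pos hδ.ne' (by norm_num)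
  obtain ⟨K₁, hK₁⟩ := eventually_atTop.1
    (ENNReal.tendsto_nhds_zero.1 (hTclose ε₁ hε₁) (δ / 3) hδ3)
  refine ⟨max K₁ (r + 1), le_max_right _ _, fun k hk => ?_⟩
  have hk1 : 1 ≤ k := le_trans (by omega) hk
  have hkr : 1 ≤ k - r := by
    have := le_trans (le_max_right K₁ (r + 1)) hk; omega
  set j := k - r with hj
  set c : EuclideanSpace ℝ (Fin h₀) := (vol d k)⁻¹ • ∫ ω, S j ω ∂P with hc
  -- LLN for scale j
  have hlln := lln hd P (T j) (S j) (hTindep j hkr) (hTident j hkr) (hint j)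
    (ε₁ * vol d k) (mul_pos hε₁ (vol_pos hk1))
  set t := ε₁ / (2 * ε₁ + C) with ht
  have ht0 : 0 < t := div_pos hε₁ (by linarith)
  -- eventual bounds
  have hRn := eventually_atTop.1 (ENNReal.tendsto_nhds_zero.1
    (hreg k hk1 ε₁ hε₁) (δ / 3) hδ3)
  obtain ⟨N₁, hN₁⟩ := hRn
  have hLm := eventually_atTop.1 (ENNReal.tendsto_nhds_zero.1
    (hlln.comp (mfun_tendsto hk1)) (δ / 3) hδ3)
  obtain ⟨N₂, hN₂⟩ := hLm
  have hratio_ev : ∀ᶠ n : ℕ in atTop, 1 - t ≤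
      (((2 * mfun k n + 1 : ℕ) : ℝ) / ((2 * mfun k n + 3 : ℕ) : ℝ)) ^ d :=
    (mfun_tendsto hk1).eventually (ratio_eventually d ht0)
  filter_upwards [eventually_ge_atTop N₁, eventually_ge_atTop N₂,
    eventually_ge_atTop (3 * k), hratio_ev] with n hn1 hn2 hn3 hratio
  -- notation
  set m := mfun k n with hm
  obtain ⟨hs1, hs2, hs3⟩ := mfun_sandwich hk1 hn3
  set M := (2 * m + 1) * k with hM
  have hM1 : 1 ≤ M := Nat.mul_pos (by omega) hk1
  have hn1' : 1 ≤ n := le_trans (by omega) hn3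
  have hqpos : 0 < vol d M := vol_pos hM1
  have hvpos : 0 < vol d n := vol_pos hn1'
  have hqv : vol d M ≤ vol d n := vol_mono hs1
  -- the three bad sets
  set Rn := {ω : Ω | ∃ m' : ℕ, (2 * m' + 1) * k ≤ n ∧ n < (2 * m' + 3) * k ∧
      ε₁ * vol d n < ‖S n ω - S ((2 * m' + 1) * k) ω‖} with hRndef
  set Nk := {ω : Ω | ∃ m' : ℕ, 1 ≤ m' ∧ ε₁ * vol d ((2 * m' + 1) * k) <
      ‖S ((2 * m' + 1) * k) ω - ∑ z ∈ box d m', T j z ω‖} with hNkdef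
  set Lm := {ω : Ω | ε₁ * vol d k ≤
      ‖(((2 * m + 1 : ℕ) : ℝ) ^ d)⁻¹ • ∑ z ∈ box d m, T j z ω - ∫ ω, S j ω ∂P‖} with hLmdef
  have hsub : {ω : Ω | ε ≤ ‖(vol d n)⁻¹ • S n ω - c‖} ⊆ Rn ∪ (Nk ∪ Lm) := by
    intro ω hω
    by_contra hcon
    simp only [Set.mem_union, not_or] at hcon
    obtain ⟨hcR, hcN, hcL⟩ := hcon
    simp only [hRndef, Set.mem_setOf_eq, not_exists, not_and, not_lt] at hcR
    simp only [hNkdef, Set.mem_setOf_eq, not_exists, not_and, not_lt] at hcN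
    simp only [hLmdef, Set.mem_setOf_eq, not_le] at hcL
    have h1 : ‖S n ω - S M ω‖ ≤ ε₁ * vol d n := hcR m hs1 hs2
    have h2 : ‖S M ω - ∑ z ∈ box d m, T j z ω‖ ≤ ε₁ * vol d M := hcN m hs3
    -- convert LLN bound
    have hvolM : vol d M = ((2 * m + 1 : ℕ) : ℝ) ^ d * vol d k := vol_mul d m k
    have hkpos : 0 < vol d k := vol_pos hk1
    have hA : (0 : ℝ) < ((2 * m + 1 : ℕ) : ℝ) ^ d := by positivity
    have h3 : ‖(vol d M)⁻¹ • ∑ z ∈ box d m, T j z ω - c‖ ≤ ε₁ := by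
      have hrw : (vol d M)⁻¹ • ∑ z ∈ box d m, T j z ω - c
          = (vol d k)⁻¹ • ((((2 * m + 1 : ℕ) : ℝ) ^ d)⁻¹ • ∑ z ∈ box d m, T j z ω
              - ∫ ω, S j ω ∂P) := by
        rw [hc, smul_sub, hvolM, mul_inv, mul_comm, mul_smul]
      rw [hrw, norm_smul, Real.norm_eq_abs, abs_of_pos (inv_pos.2 hkpos),
        inv_mul_le_iff₀ hkpos]
      nlinarith [hcL.le]
    have hI : ‖c‖ ≤ C := by
      rw [hc, norm_smul, Real.norm_eq_abs, abs_of_pos (inv_pos.2 hkpos),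
        inv_mul_le_iff₀ hkpos]
      calc ‖∫ ω, S j ω ∂P‖ ≤ C * vol d j := hC j hkr
        _ ≤ C * vol d k := by
            apply mul_le_mul_of_nonneg_left _ hC0
            exact vol_mono (by omega)
        _ ≤ vol d k * C := by ring_nf; exact le_refl _
    have hratio' : 1 - t ≤ vol d M / vol d n := by
      have hvolM3 : vol d ((2 * m + 3) * k) = ((2 * m + 3 : ℕ) : ℝ) ^ d * vol d k := by
        have : vol d ((2 * (m + 1) + 1) * k)
            = ((2 * (m + 1) + 1 : ℕ) : ℝ) ^ d * vol d k := vol_mul d (m + 1) k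
        have e : 2 * m + 3 = 2 * (m + 1) + 1 := by omega
        rw [e]; exact this
      have hvn : vol d n ≤ ((2 * m + 3 : ℕ) : ℝ) ^ d * vol d k := by
        rw [← hvolM3]; exact vol_mono hs2.le
      have hB : (0 : ℝ) < ((2 * m + 3 : ℕ) : ℝ) ^ d := by positivity
      calc (1 : ℝ) - t ≤ (((2 * m + 1 : ℕ) : ℝ) / ((2 * m + 3 : ℕ) : ℝ)) ^ d := hratio
        _ = (((2 * m + 1 : ℕ) : ℝ) ^ d * vol d k) / (((2 * m + 3 : ℕ) : ℝ) ^ d * vol d k) := by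
            rw [div_pow, mul_div_mul_right _ _ hkpos.ne']
        _ ≤ vol d M / vol d n := by
            rw [hvolM]
            exact div_le_div_of_nonneg_left (by positivity) hvpos hvn
    have hdet := det_bound (S n ω) (S M ω) (∑ z ∈ box d m, T j z ω) c
      (vol d n) (vol d M) ε₁ C hqpos hqv hC0 hε₁ h1 h2 h3 hI hratio'
    rw [Set.mem_setOf_eq] at hω
    have : ε ≤ 4 * ε₁ := le_trans hω hdet
    rw [hε₁def] at this
    linarith
  calc P {ω : Ω | ε ≤ ‖(vol d n)⁻¹ • S n ω - c‖} ≤ P (Rn ∪ (Nk ∪ Lm)) := measure_mono hsub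
    _ ≤ P Rn + P (Nk ∪ Lm) := measure_union_le _ _
    _ ≤ P Rn + (P Nk + P Lm) := add_le_add le_rfl (measure_union_le _ _)
    _ ≤ δ / 3 + (δ / 3 + δ / 3) := by
        refine add_le_add (hN₁ n hn1) (add_le_add ?_ (hN₂ n hn2))
        exact hK₁ k (le_trans (le_max_left _ _) hk)
    _ = δ := by rw [← add_assoc]; exact ENNReal.add_thirds δ



theorem wlln_of_weakRegular_weakNearlyAdditive
    (d h : ℕ) (hd : 1 ≤ d) (hh : 1 ≤ h)
    (P : Measure Ω) [IsProbabilityMeasure P]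
    (S : ℕ → Ω → EuclideanSpace ℝ (Fin h)) (hmeas : ∀ n, Measurable (S n))
    (hint : ∀ n, Integrable (S n) P)
    (hreg : WeakRegular d h P S) (hadd : WeakNearlyAdditive d h P S)
    (hbound : ∃ C : ℝ, ∀ n, 1 ≤ n → ‖∫ ω, S n ω ∂P‖ ≤ C * vol d n) :
    ∃ Shat : EuclideanSpace ℝ (Fin h),
      Tendsto (fun n => (vol d n)⁻¹ • ∫ ω, S n ω ∂P) atTop (nhds Shat) ∧
      TendstoInMeasure P (fun n ω => (vol d n)⁻¹ • S n ω) atTop (fun _ => Shat) := by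
  classical
  obtain ⟨r, T, hW⟩ := hadd
  obtain ⟨C₀, hC₀⟩ := hbound
  set C := max C₀ 0 with hCdef
  have hC0 : (0:ℝ) ≤ C := le_max_right _ _
  have hC : ∀ n, 1 ≤ n → ‖∫ ω, S n ω ∂P‖ ≤ C * vol d n := fun n hn =>
    le_trans (hC₀ n hn) (mul_le_mul_of_nonneg_right (le_max_left _ _) (vol_pos hn).le)
  set c : ℕ → EuclideanSpace ℝ (Fin h) :=
    fun k => (vol d k)⁻¹ • ∫ ω, S (k - r) ω ∂P with hcdef
  have key : ∀ ε : ℝ, 0 < ε → ∀ δ : ℝ≥0∞, 0 < δ → ∃ K : ℕ, ∀ k, K ≤ k →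
      ∀ᶠ n in atTop, P {ω | ε ≤ ‖(vol d n)⁻¹ • S n ω - c k‖} ≤ δ := by
    intro ε hε δ hδ
    obtain ⟨K, -, hK⟩ := claimA hd hint hreg hW hC0 hC hε hδ
    exact ⟨K, hK⟩
  -- `c` is Cauchy
  have hcauchy : CauchySeq c := by
    rw [Metric.cauchySeq_iff]
    intro ε hε
    obtain ⟨K, hK⟩ := key (ε / 3) (by positivity) (1 / 3) (by norm_num)
    refine ⟨K, fun a ha b hb => ?_⟩
    obtain ⟨n, hna, hnb⟩ := ((hK a ha).and (hK b hb)).exists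
    set A := {ω : Ω | ε / 3 ≤ ‖(vol d n)⁻¹ • S n ω - c a‖} with hA
    set B := {ω : Ω | ε / 3 ≤ ‖(vol d n)⁻¹ • S n ω - c b‖} with hB
    have hPAB : P (A ∪ B) < 1 := by
      calc P (A ∪ B) ≤ P A + P B := measure_union_le _ _
        _ ≤ 1 / 3 + 1 / 3 := add_le_add hna hnb
        _ < 1 := by
            rw [ENNReal.div_add_div_same, ENNReal.div_lt_iff (by norm_num) (by norm_num)]
            norm_num
    have hne : ((A ∪ B)ᶜ).Nonempty := by
      by_contra hcon
      rw [Set.not_nonempty_iff_eq_empty, Set.compl_empty_iff] at hcon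
      rw [hcon, measure_univ] at hPAB
      exact lt_irrefl _ hPAB
    obtain ⟨ω, hω⟩ := hne
    simp only [Set.mem_compl_iff, Set.mem_union, not_or, hA, hB, Set.mem_setOf_eq,
      not_le] at hω
    calc dist (c a) (c b) ≤ dist (c a) ((vol d n)⁻¹ • S n ω)
          + dist ((vol d n)⁻¹ • S n ω) (c b) := dist_triangle _ _ _
      _ < ε / 3 + ε / 3 := by
          rw [dist_comm (c a) _, dist_eq_norm, dist_eq_norm]
          exact add_lt_add hω.1 hω.2
      _ < ε := by linarith
  obtain ⟨Shat, hShat⟩ := cauchySeq_tendsto_of_complete hcauchy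
  refine ⟨Shat, ?_, ?_⟩
  · -- convergence of normalized expectations
    have h1 : Tendsto (fun n : ℕ => c (n + r)) atTop (nhds Shat) :=
      hShat.comp (tendsto_add_atTop_nat r)
    have hg : Tendsto (fun n : ℕ => (1 + (r : ℝ) / n) ^ d) atTop (nhds 1) := by
      have h2 : Tendsto (fun n : ℕ => 1 + (r : ℝ) / n) atTop (nhds 1) := by
        have := tendsto_const_nhds (x := (1:ℝ)) (f := atTop (α := ℕ))
        have h3 := this.add (tendsto_const_div_atTop_nhds_zero_nat (r:ℝ))
        rw [add_zero] at h3
        exact h3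
      have := h2.pow d
      simpa using this
    have h4 := hg.smul h1
    rw [one_smul] at h4
    apply h4.congr'
    filter_upwards [eventually_ge_atTop 1] with n hn
    have hn0 : ((n : ℝ)) ≠ 0 := by
      have : (1:ℝ) ≤ (n:ℝ) := by exact_mod_cast hn
      linarith
    have hnr : (0:ℝ) < 2 * ((n + r : ℕ) : ℝ) := by
      have : (1:ℝ) ≤ ((n + r : ℕ) : ℝ) := by exact_mod_cast le_trans hn (Nat.le_add_right n r)
      linarith
    have hscal : (1 + (r : ℝ) / n) ^ d * (vol d (n + r))⁻¹ = (vol d n)⁻¹ := by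
      have he : (1 + (r : ℝ) / n) = (2 * ((n + r : ℕ) : ℝ)) / (2 * (n : ℝ)) := by
        field_simp
        push_cast
        ring
      rw [he, div_pow, vol, vol]
      rw [div_mul_eq_mul_div, mul_inv_cancel₀ (by positivity), ← one_div]
    show (1 + (r : ℝ) / n) ^ d • c (n + r) = (vol d n)⁻¹ • ∫ ω, S n ω ∂P
    rw [hcdef]
    simp only [Nat.add_sub_cancel]
    rw [smul_smul, hscal]
  · -- convergence in probability
    rw [tendstoInMeasure_iff_dist]
    intro ε hε
    rw [ENNReal.tendsto_nhds_zero]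
    intro δ hδ
    obtain ⟨K, hK⟩ := key (ε / 2) (by positivity) δ hδ
    have hev : ∀ᶠ k in atTop, dist (c k) Shat < ε / 2 :=
      hShat.eventually (Metric.ball_mem_nhds Shat (by positivity))
    obtain ⟨k, hk1, hk2⟩ := ((eventually_ge_atTop K).and hev).exists
    filter_upwards [hK k hk1] with n hn
    refine le_trans (measure_mono ?_) hn
    intro ω hω
    simp only [Set.mem_setOf_eq] at hω ⊢
    rw [dist_eq_norm] at hω
    have htri : ‖(vol d n)⁻¹ • S n ω - Shat‖ ≤
        ‖(vol d n)⁻¹ • S n ω - c k‖ + ‖c k - Shat‖ := by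
      calc ‖(vol d n)⁻¹ • S n ω - Shat‖
          = ‖((vol d n)⁻¹ • S n ω - c k) + (c k - Shat)‖ := by abel_nf
        _ ≤ _ := norm_add_le _ _
    have hck : ‖c k - Shat‖ < ε / 2 := by rw [← dist_eq_norm]; exact hk2
    linarith

end RandomCubical
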